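/- Let G be a linearly ordered additive commutative group, let ℤ ×ₗ G be the lexicographic product, and u = (1, 0). For every x with 0 ≤ x ≤ u, the characteristic identity of the variety V(C) holds: (x ⊕ x) ⊙ (x ⊕ x) = (x ⊙ x) ⊕ (x ⊙ x), where x ⊕ y = (x + y) ⊓ u and x ⊙ y = (x + y − u) ⊔ 0. That is, the perfect MV-algebra Δ(G) satisfies (2x)² = 2(x²). -/

import Mathlib

/-- The perfect MV-algebra `Δ(G) = Γ(ℤ ×ₗ G, (1,0))` satisfies the identity
`(2x)² = 2(x²)` axiomatizing the variety `V(C)` generated by Chang's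
MV-algebra. -/
theorem stmt_9 {G : Type*} [AddCommGroup G] [LinearOrder G] [IsOrderedAddMonoid G]
    (u : ℤ ×ₗ G) (hu : u = toLex (1, 0)) (x : ℤ ×ₗ G) (hx0 : 0 ≤ x) (hxu : x ≤ u) :
    (((x + x) ⊓ u) + ((x + x) ⊓ u) - u) ⊔ 0 =
      (((x + x - u) ⊔ 0) + ((x + x - u) ⊔ 0)) ⊓ u := by
  subst hu
  obtain ⟨a, g⟩ := x
  rw [show ((a, g) : ℤ ×ₗ G) = toLex (a, g) from rfl]
  have key : ∀ p q : ℤ × G, p.1 < q.1 → toLex p ≤ toLex q := fun p q h =>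
    Prod.Lex.le_iff.mpr (Or.inl h)
  have h0u : (0 : ℤ ×ₗ G) ≤ toLex ((1:ℤ), (0:G)) := key (0,0) (1,0) one_pos
  have hx0' : (0:ℤ) < a ∨ (0:ℤ) = a ∧ (0:G) ≤ g := Prod.Lex.le_iff.mp hx0
  have hxu' : a < 1 ∨ a = 1 ∧ g ≤ (0:G) := Prod.Lex.le_iff.mp hxu
  rcases hx0' with ha | ⟨ha, hg⟩
  · have ha1 : a = 1 := by rcases hxu' with h | ⟨h, _⟩ <;> omega
    subst ha1
    have h1 : toLex ((1:ℤ),(0:G)) ≤ toLex (1,g) + toLex (1,g) :=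
      key (1,0) (2, g+g) (by norm_num)
    have h3 : (0 : ℤ ×ₗ G) ≤ toLex ((1:ℤ),g) + toLex (1,g) - toLex (1,0) :=
      key (0,0) (1, g+g-0) (by norm_num)
    have h4 : toLex ((1:ℤ),(0:G)) ≤
        (toLex ((1:ℤ),g) + toLex (1,g) - toLex (1,0)) +
          (toLex ((1:ℤ),g) + toLex (1,g) - toLex (1,0)) :=
      key (1,0) (2, (g+g-0)+(g+g-0)) (by norm_num)
    rw [inf_eq_right.mpr h1, sup_eq_left.mpr h3, inf_eq_right.mpr h4,
      add_sub_cancel_right, sup_eq_left.mpr h0u]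
  · subst ha
    have h1 : toLex ((0:ℤ),g) + toLex (0,g) ≤ toLex ((1:ℤ),(0:G)) :=
      key (0, g+g) (1,0) (by norm_num)
    have h2 : toLex ((0:ℤ),g) + toLex (0,g) - toLex (1,0) ≤ (0 : ℤ ×ₗ G) :=
      key (-1, g+g-0) (0,0) (by norm_num)
    have h3 : (toLex ((0:ℤ),g) + toLex (0,g)) + (toLex ((0:ℤ),g) + toLex (0,g)) -
        toLex (1,0) ≤ (0 : ℤ ×ₗ G) :=
      key (-1, (g+g)+(g+g)-0) (0,0) (by norm_num)
    rw [inf_eq_left.mpr h1, sup_eq_right.mpr h2, sup_eq_right.mpr h3, add_zero,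
      inf_eq_left.mpr h0u]
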